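/- Every system x^{k+1} dy/dx = A(x)y with A(x) an analytic traceless 2×2 matrix germ satisfying A(0) ≠ 0 is analytically gauge equivalent to a companion system x^{k+1} dy/dx = [[0,1],[Q(x),0]] y for some analytic germ Q(x). -/

import Mathlib

open Matrix Filter


lemma analyticAt_deriv {f : ℂ → ℂ} {x : ℂ} (h : AnalyticAt ℂ f x) : AnalyticAt ℂ (deriv f) x := by
  obtain ⟨s, hs, h2⟩ := h.eventually_analyticAt.exists_mem
  exact AnalyticOnNhd.deriv (fun y hy => h2 y hy) x (mem_of_mem_nhds hs)

lemma analytic_sqrt {b : ℂ → ℂ} (hb : AnalyticAt ℂ b 0) (hb0 : b 0 ≠ 0) :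
    ∃ β : ℂ → ℂ, AnalyticAt ℂ β 0 ∧ ∀ᶠ x in nhds (0:ℂ), β x ^ 2 * b x = 1 := by
  obtain ⟨β₀, hβ₀⟩ := IsAlgClosed.exists_pow_nat_eq ((b 0)⁻¹) (n := 2) (by norm_num)
  set h : ℂ → ℂ := fun x => b x / b 0 with hh
  have hh0 : h 0 = 1 := div_self hb0
  have hhan : AnalyticAt ℂ h 0 := hb.div analyticAt_const hb0
  have hL : AnalyticAt ℂ (fun x => Complex.log (h x)) 0 := by
    have m : h 0 ∈ Complex.slitPlane := by rw [hh0]; exact Complex.one_mem_slitPlane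
    exact (analyticAt_clog m).comp hhan
  refine ⟨fun x => β₀ * Complex.exp (-(Complex.log (h x)) / 2), ?_, ?_⟩
  · exact analyticAt_const.mul ((analyticAt_cexp.comp ((hL.neg).div analyticAt_const (by norm_num))))
  · have hbne : ∀ᶠ x in nhds (0:ℂ), b x ≠ 0 := hb.continuousAt.eventually_ne hb0
    filter_upwards [hbne] with x hx
    have hhx : h x ≠ 0 := div_ne_zero hx hb0
    have : Complex.exp (-(Complex.log (h x)) / 2) ^ 2 = (h x)⁻¹ := by
      rw [← Complex.exp_nat_mul]
      have : (2:ℂ) * (-(Complex.log (h x)) / 2) = -(Complex.log (h x)) := by ring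
      rw [show ((2:ℕ):ℂ) = (2:ℂ) by norm_num, this, Complex.exp_neg, Complex.exp_log hhx]
    rw [mul_pow, this, hβ₀, hh]
    field_simp

lemma main (k : ℕ) (A : ℂ → Matrix (Fin 2) (Fin 2) ℂ)
    (hA : ∀ i j, AnalyticAt ℂ (fun x => A x i j) 0)
    (htr : ∀ x, (A x).trace = 0)
    (hb0 : A 0 0 1 ≠ 0) :
    ∃ (T : ℂ → Matrix (Fin 2) (Fin 2) ℂ) (Q : ℂ → ℂ),
      (∀ i j, AnalyticAt ℂ (fun x => T x i j) 0) ∧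
      AnalyticAt ℂ Q 0 ∧
      (T 0).det ≠ 0 ∧
      ∀ᶠ x in nhds (0:ℂ),
        (Matrix.of fun i j => x ^ (k+1) * deriv (fun t => T t i j) x)
          = !![(0:ℂ), 1; Q x, 0] * T x - T x * A x := by
  have hd : ∀ x, A x 1 1 = -(A x 0 0) := by
    intro x
    have := htr x
    simp [Matrix.trace, Matrix.diag, Fin.sum_univ_two] at this
    linear_combination this
  obtain ⟨β, hβ, hβb⟩ := analytic_sqrt (hA 0 1) hb0
  have hF : AnalyticAt ℂ (fun t => t ^ (k+1) * deriv β t + β t * A t 0 0) 0 := by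
    exact ((analyticAt_id.pow _).mul (analyticAt_deriv hβ)).add (hβ.mul (hA 0 0))
  refine ⟨fun x => !![β x, 0; x ^ (k+1) * deriv β x + β x * A x 0 0, β x * A x 0 1],
    fun x => (x ^ (k+1) * deriv (fun t => t ^ (k+1) * deriv β t + β t * A t 0 0) x
        + (x ^ (k+1) * deriv β x + β x * A x 0 0) * A x 0 0
        + β x * A x 0 1 * A x 1 0) * (β x * A x 0 1), ?_, ?_, ?_, ?_⟩
  · intro i j
    fin_cases i <;> fin_cases j <;> simp <;>
      first
        | exact hβ
        | exact hF
        | exact analyticAt_const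
        | exact hβ.mul (hA 0 1)
  · refine AnalyticAt.mul ?_ (hβ.mul (hA 0 1))
    refine AnalyticAt.add (AnalyticAt.add ?_ (hF.mul (hA 0 0))) ((hβ.mul (hA 0 1)).mul (hA 1 0))
    exact (analyticAt_id.pow _).mul (analyticAt_deriv hF)
  · have h1 : β 0 ^ 2 * A 0 0 1 = 1 := hβb.self_of_nhds
    rw [Matrix.det_fin_two_of]
    intro h
    apply one_ne_zero (α := ℂ)
    rw [← h1]
    linear_combination h
  · have E1 : ∀ᶠ x in nhds (0:ℂ), ∀ᶠ y in nhds x, β y ^ 2 * A y 0 1 = 1 :=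
      eventually_eventually_nhds.mpr hβb
    filter_upwards [hβb, E1, hβ.eventually_analyticAt, (hA 0 1).eventually_analyticAt]
      with x h1 h1n h2 h3
    have hβx : β x ≠ 0 := by
      intro h; rw [h] at h1; simp at h1
    have hg : deriv (fun y => β y ^ 2 * A y 0 1) x = 0 := by
      have he : (fun y => β y ^ 2 * A y 0 1) =ᶠ[nhds x] (fun _ => (1:ℂ)) := h1n
      rw [he.deriv_eq]; exact deriv_const x 1
    have hd2 : deriv (fun y => β y ^ 2 * A y 0 1) x
        = (2 * β x ^ 1 * deriv β x) * A x 0 1 + β x ^ 2 * deriv (fun y => A y 0 1) x := by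
      have := ((h2.differentiableAt.hasDerivAt.pow 2).mul h3.differentiableAt.hasDerivAt).deriv
      simp at this ⊢
      exact this
    have hkey : 2 * deriv β x * A x 0 1 + β x * deriv (fun y => A y 0 1) x = 0 := by
      apply mul_left_cancel₀ hβx
      rw [mul_zero]
      rw [hg] at hd2
      linear_combination -hd2
    have hprod : deriv (fun t => β t * A t 0 1) x
        = deriv β x * A x 0 1 + β x * deriv (fun y => A y 0 1) x :=
      (h2.differentiableAt.hasDerivAt.mul h3.differentiableAt.hasDerivAt).deriv
    ext i j
    fin_cases i <;> fin_cases j <;>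
      simp only [Fin.mk_zero, Fin.mk_one, Matrix.of_apply, Matrix.sub_apply, Matrix.mul_apply,
        Fin.sum_univ_two, Matrix.cons_val', Matrix.cons_val_zero, Matrix.cons_val_one,
        Matrix.head_cons, Matrix.head_fin_const, Matrix.empty_val', Matrix.cons_val_fin_one,
        hd x]
    · ring
    · simp
    · linear_combination (-(x ^ (k+1) * deriv (fun t => t ^ (k+1) * deriv β t + β t * A t 0 0) x
        + (x ^ (k+1) * deriv β x + β x * A x 0 0) * A x 0 0
        + β x * A x 0 1 * A x 1 0)) * h1
    · rw [hprod]
      linear_combination (x:ℂ) ^ (k+1) * hkey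

lemma transfer (k : ℕ) (A : ℂ → Matrix (Fin 2) (Fin 2) ℂ)
    (hA : ∀ i j, AnalyticAt ℂ (fun x => A x i j) 0)
    (htr : ∀ x, (A x).trace = 0)
    (C D : Matrix (Fin 2) (Fin 2) ℂ) (hCD : C * D = 1) (hDC : D * C = 1)
    (hb : (C * A 0 * D) 0 1 ≠ 0) :
    ∃ (T : ℂ → Matrix (Fin 2) (Fin 2) ℂ) (Q : ℂ → ℂ),
      (∀ i j, AnalyticAt ℂ (fun x => T x i j) 0) ∧
      AnalyticAt ℂ Q 0 ∧
      (T 0).det ≠ 0 ∧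
      ∀ᶠ x in nhds (0:ℂ),
        (Matrix.of fun i j => x ^ (k+1) * deriv (fun t => T t i j) x)
          = !![(0:ℂ), 1; Q x, 0] * T x - T x * A x := by
  have hA' : ∀ i j, AnalyticAt ℂ (fun x => (C * A x * D) i j) 0 := by
    intro i j
    have e : (fun x => (C * A x * D) i j) = fun x =>
        (C i 0 * A x 0 0 + C i 1 * A x 1 0) * D 0 j
          + (C i 0 * A x 0 1 + C i 1 * A x 1 1) * D 1 j := by
      funext x; simp [Matrix.mul_apply, Fin.sum_univ_two]
    rw [e]
    exact (((analyticAt_const.mul (hA 0 0)).add (analyticAt_const.mul (hA 1 0))).mul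
        analyticAt_const).add
      (((analyticAt_const.mul (hA 0 1)).add (analyticAt_const.mul (hA 1 1))).mul analyticAt_const)
  have htr' : ∀ x, (C * A x * D).trace = 0 := by
    intro x
    rw [Matrix.trace_mul_comm, ← Matrix.mul_assoc, hDC, Matrix.one_mul]
    exact htr x
  obtain ⟨T', Q, hT', hQ, hdet, heq⟩ := main k _ hA' htr' hb
  refine ⟨fun x => T' x * C, Q, ?_, hQ, ?_, ?_⟩
  · intro i j
    have e : (fun x => (T' x * C) i j) = fun x => T' x i 0 * C 0 j + T' x i 1 * C 1 j := by
      funext x; simp [Matrix.mul_apply, Fin.sum_univ_two]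
    rw [e]
    exact ((hT' i 0).mul analyticAt_const).add ((hT' i 1).mul analyticAt_const)
  · rw [Matrix.det_mul]
    have hCdet : C.det ≠ 0 := by
      intro h
      have h2 : (C * D).det = 1 := by rw [hCD, Matrix.det_one]
      rw [Matrix.det_mul, h, zero_mul] at h2
      exact zero_ne_one h2
    exact mul_ne_zero hdet hCdet
  · filter_upwards [heq, (hT' 0 0).eventually_analyticAt, (hT' 0 1).eventually_analyticAt,
      (hT' 1 0).eventually_analyticAt, (hT' 1 1).eventually_analyticAt] with x hx h00 h01 h10 h11
    have hDT : ∀ i j, DifferentiableAt ℂ (fun t => T' t i j) x := by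
      intro i j
      fin_cases i <;> fin_cases j
      exacts [h00.differentiableAt, h01.differentiableAt, h10.differentiableAt,
        h11.differentiableAt]
    have hder : ∀ i j, deriv (fun t => (T' t * C) i j) x
        = deriv (fun t => T' t i 0) x * C 0 j + deriv (fun t => T' t i 1) x * C 1 j := by
      intro i j
      have e : (fun t => (T' t * C) i j) = fun t => T' t i 0 * C 0 j + T' t i 1 * C 1 j := by
        funext t; simp [Matrix.mul_apply, Fin.sum_univ_two]
      rw [e, deriv_fun_add ((hDT i 0).mul_const _) ((hDT i 1).mul_const _),
        deriv_mul_const (hDT i 0), deriv_mul_const (hDT i 1)]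
    have key : (Matrix.of fun i j => x ^ (k+1) * deriv (fun t => (T' t * C) i j) x)
        = (Matrix.of fun i j => x ^ (k+1) * deriv (fun t => T' t i j) x) * C := by
      ext i j
      simp only [Matrix.of_apply]
      rw [hder i j]
      simp only [Matrix.mul_apply, Fin.sum_univ_two, Matrix.of_apply]
      ring
    rw [key, hx, Matrix.sub_mul]
    congr 1
    · rw [Matrix.mul_assoc]
    · rw [Matrix.mul_assoc (T' x), Matrix.mul_assoc (C * A x) D C, hDC, Matrix.mul_one,
        ← Matrix.mul_assoc]

/-- every traceless analytic system `x^{k+1} y' = A(x) y` with `A(0) ≠ 0`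
is analytically gauge equivalent to a companion system
`x^{k+1} y' = [[0,1],[Q(x),0]] y`, i.e. there is an analytic `T` with `det T(0) ≠ 0`
satisfying the gauge transformation equation `x^{k+1} T' = [[0,1],[Q,0]]·T - T·A`
near `0`. -/
theorem stmt_1 (k : ℕ) (A : ℂ → Matrix (Fin 2) (Fin 2) ℂ)
    (hA : ∀ i j, AnalyticAt ℂ (fun x => A x i j) 0)
    (htr : ∀ x, (A x).trace = 0)
    (hA0 : A 0 ≠ 0) :
    ∃ (T : ℂ → Matrix (Fin 2) (Fin 2) ℂ) (Q : ℂ → ℂ),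
      (∀ i j, AnalyticAt ℂ (fun x => T x i j) 0) ∧
      AnalyticAt ℂ Q 0 ∧
      (T 0).det ≠ 0 ∧
      ∀ᶠ x in nhds (0:ℂ),
        (Matrix.of fun i j => x ^ (k+1) * deriv (fun t => T t i j) x)
          = !![(0:ℂ), 1; Q x, 0] * T x - T x * A x := by
  have hd : ∀ x, A x 1 1 = -(A x 0 0) := by
    intro x
    have := htr x
    simp [Matrix.trace, Matrix.diag, Fin.sum_univ_two] at this
    linear_combination this
  by_cases hb : A 0 0 1 ≠ 0
  · exact main k A hA htr hb
  push_neg at hb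
  by_cases hc : A 0 1 0 ≠ 0
  · refine transfer k A hA htr !![0,1;1,0] !![0,1;1,0] ?_ ?_ ?_
    · rw [Matrix.mul_fin_two, Matrix.one_fin_two]; norm_num
    · rw [Matrix.mul_fin_two, Matrix.one_fin_two]; norm_num
    · have e : ((!![0,1;1,0] * A 0 * !![0,1;1,0] : Matrix (Fin 2) (Fin 2) ℂ)) 0 1 = A 0 1 0 := by
        simp only [Matrix.of_apply, Matrix.mul_apply, Fin.sum_univ_two, Matrix.cons_val_zero, Matrix.cons_val_one,
          Matrix.head_cons, Matrix.head_fin_const, Matrix.cons_val', Matrix.empty_val',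
          Matrix.cons_val_fin_one]
        ring
      rw [e]
      exact hc
  push_neg at hc
  have ha : A 0 0 0 ≠ 0 := by
    intro h
    apply hA0
    ext i j
    fin_cases i <;> fin_cases j <;>
      simp [Fin.mk_zero, Fin.mk_one, h, hb, hc, hd 0]
  refine transfer k A hA htr !![1,1;0,1] !![1,-1;0,1] ?_ ?_ ?_
  · rw [Matrix.mul_fin_two, Matrix.one_fin_two]; norm_num
  · rw [Matrix.mul_fin_two, Matrix.one_fin_two]; norm_num
  · have e : ((!![1,1;0,1] * A 0 * !![1,-1;0,1] : Matrix (Fin 2) (Fin 2) ℂ)) 0 1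
        = -(2 * A 0 0 0) := by
      simp only [Matrix.of_apply, Matrix.mul_apply, Fin.sum_univ_two, Matrix.cons_val_zero, Matrix.cons_val_one,
        Matrix.head_cons, Matrix.head_fin_const, Matrix.cons_val', Matrix.empty_val',
        Matrix.cons_val_fin_one, hb, hc, hd 0]
      ring
    rw [e]
    exact neg_ne_zero.mpr (mul_ne_zero two_ne_zero ha)
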